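/- Let p, q be integers with 2 ≤ p < q and let γ be a real number with γ > γ_{p,q}. Then 1 − u^{p−1} + γ u^{q−1} > 0 for every u ≥ 0; in particular the function g(u) = 1 − u^{p−1} + γ u^{q−1} has no root in (0, ∞). -/

import Mathlib

/-- The critical parameter `γ_{p,q} = ((p−1)/(q−1))·((q−p)/(q−1))^{(q−p)/(p−1)}`. -/
noncomputable def gammaCrit (p q : ℕ) : ℝ :=
  (((p : ℝ) - 1) / ((q : ℝ) - 1)) *
    (((q : ℝ) - (p : ℝ)) / ((q : ℝ) - 1)) ^ (((q : ℝ) - (p : ℝ)) / ((p : ℝ) - 1))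

/-- Weighted AM-GM gives the key Young-type inequality with the critical constant. -/
lemma young_key {A B : ℝ} (hA : 1 ≤ A) (hAB : A < B) {u : ℝ} (hu : 0 ≤ u) :
    u ^ A ≤ 1 + (A / B) * ((B - A) / B) ^ ((B - A) / A) * u ^ B := by
  have hA0 : 0 < A := lt_of_lt_of_le one_pos hA
  have hB0 : 0 < B := hA0.trans hAB
  have hBA : 0 < B - A := by linarith
  set r : ℝ := (B - A) / B with hr
  have hr0 : 0 < r := div_pos hBA hB0
  have key := Real.geom_mean_le_arith_mean2_weighted
    (w₁ := (B - A) / B) (w₂ := A / B)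
    (p₁ := B / (B - A)) (p₂ := r ^ ((B - A) / A) * u ^ B)
    (le_of_lt hr0) (le_of_lt (div_pos hA0 hB0))
    (le_of_lt (div_pos hB0 hBA))
    (mul_nonneg (Real.rpow_nonneg hr0.le _) (Real.rpow_nonneg hu _))
    (by field_simp; ring)
  have h1 : (B - A) / A * (A / B) = (B - A) / B := by
    field_simp
  have h2 : B * (A / B) = A := by field_simp
  have h3 : B / (B - A) = r⁻¹ := by rw [hr, inv_div]
  have hlhs : (B / (B - A)) ^ ((B - A) / B) * (r ^ ((B - A) / A) * u ^ B) ^ (A / B)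
      = u ^ A := by
    rw [Real.mul_rpow (Real.rpow_nonneg hr0.le _) (Real.rpow_nonneg hu _),
      ← Real.rpow_mul hr0.le, ← Real.rpow_mul hu, h1, h2, h3,
      Real.inv_rpow hr0.le, ← mul_assoc,
      inv_mul_cancel₀ (ne_of_gt (Real.rpow_pos_of_pos hr0 _)), one_mul]
  have hrhs : (B - A) / B * (B / (B - A)) = 1 := by field_simp
  rw [hlhs] at key
  calc u ^ A ≤ (B - A) / B * (B / (B - A)) + A / B * (r ^ ((B - A) / A) * u ^ B) := key
    _ = 1 + A / B * r ^ ((B - A) / A) * u ^ B := by rw [hrhs]; ring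

theorem no_root_of_gamma_gt_crit (p q : ℕ) (hp : 2 ≤ p) (hpq : p < q)
    (γ : ℝ) (hγ : gammaCrit p q < γ) :
    (∀ u : ℝ, 0 ≤ u → 0 < 1 - u ^ (p - 1) + γ * u ^ (q - 1)) ∧
    ¬ ∃ u : ℝ, 0 < u ∧ 1 - u ^ (p - 1) + γ * u ^ (q - 1) = 0 := by
  have hp1 : 1 ≤ p := le_trans (by norm_num) hp
  have hq1 : 1 ≤ q := le_trans hp1 (le_of_lt hpq)
  have hA : (1:ℝ) ≤ (p:ℝ) - 1 := by
    have : (2:ℝ) ≤ (p:ℝ) := by exact_mod_cast hp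
    linarith
  have hAB : (p:ℝ) - 1 < (q:ℝ) - 1 := by
    have : (p:ℝ) < (q:ℝ) := by exact_mod_cast hpq
    linarith
  have hγc : 0 < gammaCrit p q := by
    have hA0 : (0:ℝ) < (p:ℝ) - 1 := by linarith
    have hB0 : (0:ℝ) < (q:ℝ) - 1 := by linarith
    have hBA : (0:ℝ) < (q:ℝ) - (p:ℝ) := by linarith
    exact mul_pos (div_pos hA0 hB0)
      (Real.rpow_pos_of_pos (div_pos hBA hB0) _)
  have hqp : ((q:ℝ) - 1) - ((p:ℝ) - 1) = (q:ℝ) - (p:ℝ) := by ring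
  have main : ∀ u : ℝ, 0 ≤ u → 0 < 1 - u ^ (p - 1) + γ * u ^ (q - 1) := by
    intro u hu
    have hcastp : (u : ℝ) ^ (p - 1) = u ^ ((p:ℝ) - 1) := by
      rw [← Real.rpow_natCast u (p - 1)]
      congr 1
      push_cast [Nat.cast_sub hp1]
      ring
    have hcastq : (u : ℝ) ^ (q - 1) = u ^ ((q:ℝ) - 1) := by
      rw [← Real.rpow_natCast u (q - 1)]
      congr 1
      push_cast [Nat.cast_sub hq1]
      ring
    have key := young_key hA hAB hu
    rw [hqp] at key
    have hkey : u ^ ((p:ℝ) - 1) ≤ 1 + gammaCrit p q * u ^ ((q:ℝ) - 1) := by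
      rw [gammaCrit]; exact key
    rcases eq_or_lt_of_le hu with h0 | h0
    · have : u = 0 := h0.symm
      subst this
      rw [Real.zero_rpow (by linarith : (p:ℝ) - 1 ≠ 0),
        Real.zero_rpow (by linarith : (q:ℝ) - 1 ≠ 0)] at *
      rw [hcastp, hcastq]
      norm_num
    · have huB : 0 < u ^ ((q:ℝ) - 1) := Real.rpow_pos_of_pos h0 _
      have : (gammaCrit p q) * u ^ ((q:ℝ) - 1) < γ * u ^ ((q:ℝ) - 1) :=
        (mul_lt_mul_of_pos_right hγ huB)
      rw [hcastp, hcastq]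
      linarith
  refine ⟨main, ?_⟩
  rintro ⟨u, hu, heq⟩
  have := main u hu.le
  linarith
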